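/- Let A be a real m×n matrix with rows a_1,…,a_m, b ∈ ℝ^m, and assume V = {v ∈ ℝ^n : A v ≥ b} is nonempty and bounded. Let c ∈ ℝ^n and suppose the set of minimizers of v ↦ c · v over V is a singleton {v*}. Then there exists ρ ∈ ℝ^m with ρ ≥ 0, A^T ρ = c, and such that for every index j: ρ_j > 0 if and only if a_j · v* = b_j (a strictly complementary dual optimal solution). -/

import Mathlib

open Matrix Set BigOperators

noncomputable section

/-- The polyhedron `V = {v : A v ≥ b}` (inequalities entrywise). -/
def polyV {m n : ℕ} (A : Matrix (Fin m) (Fin n) ℝ) (b : Fin m → ℝ) : Set (Fin n → ℝ) :=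
  {v | b ≤ A.mulVec v}

/-- `z*(c)`: the optimal (infimum) value of `c · v` over `V`. -/
noncomputable def zstar {m n : ℕ} (A : Matrix (Fin m) (Fin n) ℝ) (b : Fin m → ℝ)
    (c : Fin n → ℝ) : ℝ :=
  sInf ((fun v => c ⬝ᵥ v) '' polyV A b)

/-- `V*(c)`: the set of optimal solutions of `min {c · v : v ∈ V}`. -/
def Vstar {m n : ℕ} (A : Matrix (Fin m) (Fin n) ℝ) (b : Fin m → ℝ)
    (c : Fin n → ℝ) : Set (Fin n → ℝ) :=
  {v ∈ polyV A b | c ⬝ᵥ v = zstar A b c}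

namespace Farkas11

variable {ι κ : Type*} [Fintype ι] [DecidableEq ι] [Fintype κ]

abbrev Euc (κ : Type*) [Fintype κ] := EuclideanSpace ℝ κ

/-- linear independence supported on a finset, without subtypes -/
def LIon (v : ι → Euc κ) (S : Finset ι) : Prop :=
  ∀ g : ι → ℝ, (∀ i ∉ S, g i = 0) → ∑ i, g i • v i = 0 → g = 0

open Finset in
lemma carath (v : ι → Euc κ) :
    ∀ (k : ℕ) (c : ι → ℝ), (Finset.univ.filter fun i => c i ≠ 0).card ≤ k → 0 ≤ c →
    ∃ c' : ι → ℝ, 0 ≤ c' ∧ ∑ i, c' i • v i = ∑ i, c i • v i ∧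
      LIon v (Finset.univ.filter fun i => c' i ≠ 0) := by
  intro k
  induction k with
  | zero =>
    intro c hcard hc
    refine ⟨c, hc, rfl, ?_⟩
    have h0 : (Finset.univ.filter fun i => c i ≠ 0) = ∅ := by
      simpa using Nat.le_zero.mp hcard
    rw [h0]
    intro g hg _
    funext i
    exact hg i (Finset.notMem_empty i)
  | succ k ih =>
    intro c hcard hc
    by_cases hLI : LIon v (Finset.univ.filter fun i => c i ≠ 0)
    · exact ⟨c, hc, rfl, hLI⟩
    · rw [LIon] at hLI
      push_neg at hLI
      obtain ⟨g, hgsupp, hgsum, hgne⟩ := hLI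
      have hgc : ∀ i, c i = 0 → g i = 0 := by
        intro i hi
        exact hgsupp i (by simp [hi])
      have key : ∀ g : ι → ℝ, (∀ i, c i = 0 → g i = 0) → ∑ i, g i • v i = 0 →
          (∃ i, 0 < g i) →
          ∃ c' : ι → ℝ, 0 ≤ c' ∧ ∑ i, c' i • v i = ∑ i, c i • v i ∧
            LIon v (Finset.univ.filter fun i => c' i ≠ 0) := by
        intro g hgc hgsum ⟨i1, hi1⟩
        set T := Finset.univ.filter fun i => 0 < g i with hT
        have hTne : T.Nonempty := ⟨i1, by simp [hT, hi1]⟩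
        obtain ⟨i0, hi0T, hmin⟩ := T.exists_min_image (fun i => c i / g i) hTne
        have hgi0 : 0 < g i0 := by simpa [hT] using hi0T
        set t := c i0 / g i0 with htdef
        have ht : 0 ≤ t := div_nonneg (hc i0) hgi0.le
        set c' : ι → ℝ := fun i => c i - t * g i with hc'def
        have hc' : 0 ≤ c' := by
          intro i
          rcases le_or_gt (g i) 0 with h | h
          · have : t * g i ≤ 0 := mul_nonpos_of_nonneg_of_nonpos ht h
            have hci : (0:ℝ) ≤ c i := hc i
            simp only [hc'def, Pi.zero_apply]
            linarith
          · have hiT : i ∈ T := by simp [hT, h]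
            have : t ≤ c i / g i := hmin i hiT
            have : t * g i ≤ c i := by
              rw [← le_div_iff₀ h]; exact this
            simp only [hc'def, Pi.zero_apply]
            linarith
        have hsum : ∑ i, c' i • v i = ∑ i, c i • v i := by
          simp only [hc'def, sub_smul, Finset.sum_sub_distrib]
          simp_rw [mul_smul, ← Finset.smul_sum, hgsum, smul_zero, sub_zero]
        have hci0 : c i0 ≠ 0 := by
          intro h
          exact absurd (hgc i0 h) (ne_of_gt hgi0)
        have hsupp : (Finset.univ.filter fun i => c' i ≠ 0) ⊆
            (Finset.univ.filter fun i => c i ≠ 0).erase i0 := by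
          intro i hi
          simp only [Finset.mem_filter, Finset.mem_univ, true_and] at hi
          rw [Finset.mem_erase]
          constructor
          · intro h
            apply hi
            rw [h, hc'def]
            show c i0 - t * g i0 = 0
            rw [htdef, div_mul_cancel₀ _ (ne_of_gt hgi0), sub_self]
          · simp only [Finset.mem_filter, Finset.mem_univ, true_and]
            intro h
            exact hi (by simp [hc'def, h, hgc i h])
        have hcard' : (Finset.univ.filter fun i => c' i ≠ 0).card ≤ k := by
          have h1 := Finset.card_le_card hsupp
          have h2 : ((Finset.univ.filter fun i => c i ≠ 0).erase i0).card
              = (Finset.univ.filter fun i => c i ≠ 0).card - 1 :=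
            Finset.card_erase_of_mem (by simp [hci0])
          omega
        obtain ⟨c'', h1, h2, h3⟩ := ih c' hcard' hc'
        exact ⟨c'', h1, h2.trans hsum, h3⟩
      obtain ⟨i1, hi1⟩ := Function.ne_iff.mp hgne
      have hi1' : g i1 ≠ 0 := hi1
      rcases lt_or_gt_of_ne hi1' with h | h
      · refine key (-g) (fun i hi => by simp [hgc i hi]) ?_ ⟨i1, by simpa using h⟩
        simp only [Pi.neg_apply, neg_smul, Finset.sum_neg_distrib, hgsum, neg_zero]
      · exact key g hgc hgsum ⟨i1, h⟩


def Wsub (S : Finset ι) : Submodule ℝ (ι → ℝ) where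
  carrier := {c | ∀ i ∉ S, c i = 0}
  add_mem' := fun ha hb i hi => by simp [ha i hi, hb i hi]
  zero_mem' := fun i _ => rfl
  smul_mem' := fun r c hc i hi => by simp [hc i hi]

def gmap (v : ι → Euc κ) : (ι → ℝ) →ₗ[ℝ] Euc κ where
  toFun c := ∑ i, c i • v i
  map_add' a b := by
    simp [add_smul, Finset.sum_add_distrib]
  map_smul' r a := by
    simp [mul_smul, Finset.smul_sum]

lemma isClosed_cone (v : ι → Euc κ) :
    IsClosed {x : Euc κ | ∃ c : ι → ℝ, 0 ≤ c ∧ ∑ i, c i • v i = x} := by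
  classical
  have hU : {x : Euc κ | ∃ c : ι → ℝ, 0 ≤ c ∧ ∑ i, c i • v i = x} =
      ⋃ S : Finset ι,
        (if LIon v S then
          ((gmap v).comp (Wsub (ι := ι) S).subtype) '' {y | 0 ≤ (y : ι → ℝ)} else ∅) := by
    ext x
    simp only [Set.mem_setOf_eq, Set.mem_iUnion]
    constructor
    · rintro ⟨c, hc, hsum⟩
      obtain ⟨c', hc', hsum', hLI⟩ :=
        carath v (Finset.univ.filter fun i => c i ≠ 0).card c le_rfl hc
      refine ⟨Finset.univ.filter fun i => c' i ≠ 0, ?_⟩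
      rw [if_pos hLI]
      refine ⟨⟨c', fun i hi => by simpa using hi⟩, hc', ?_⟩
      simp only [LinearMap.comp_apply, Submodule.subtype_apply]
      show ∑ i, c' i • v i = x
      rw [hsum', hsum]
    · rintro ⟨S, hS⟩
      by_cases hLI : LIon v S
      · rw [if_pos hLI] at hS
        obtain ⟨y, hy, hyx⟩ := hS
        exact ⟨(y : ι → ℝ), hy, hyx⟩
      · rw [if_neg hLI] at hS
        exact absurd hS (Set.notMem_empty x)
  rw [hU]
  apply isClosed_iUnion_of_finite
  intro S
  split_ifs with hLI
  · have hker : LinearMap.ker ((gmap v).comp (Wsub (ι := ι) S).subtype) = ⊥ := by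
      rw [LinearMap.ker_eq_bot']
      intro y hy
      have := hLI (y : ι → ℝ) y.2 hy
      exact Subtype.ext this
    have hemb := LinearMap.isClosedEmbedding_of_injective hker
    apply hemb.isClosedMap
    have : {y : Wsub (ι := ι) S | 0 ≤ (y : ι → ℝ)} =
        (Subtype.val : Wsub (ι := ι) S → (ι → ℝ)) ⁻¹' (Set.Ici 0) := rfl
    rw [this]
    exact (isClosed_Ici).preimage continuous_subtype_val
  · exact isClosed_empty

theorem farkas (M : Matrix ι κ ℝ) (d : κ → ℝ)
    (h : ∀ x : κ → ℝ, 0 ≤ M.mulVec x → 0 ≤ d ⬝ᵥ x) :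
    ∃ y : ι → ℝ, 0 ≤ y ∧ Mᵀ.mulVec y = d := by
  classical
  set eqv := WithLp.linearEquiv 2 ℝ (κ → ℝ) with heqv
  set v : ι → Euc κ := fun i => eqv.symm (M i) with hv
  have hcoord : ∀ (c : ι → ℝ), eqv (∑ i, c i • v i) = fun k => Mᵀ.mulVec c k := by
    intro c
    rw [map_sum]
    funext k
    simp only [_root_.map_smul, hv, LinearEquiv.apply_symm_apply]
    rw [Finset.sum_apply]
    simp [Matrix.mulVec, dotProduct, mul_comm]
  by_cases hd : ∃ c : ι → ℝ, 0 ≤ c ∧ ∑ i, c i • v i = eqv.symm d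
  · obtain ⟨c, hc, hsum⟩ := hd
    refine ⟨c, hc, ?_⟩
    have := congrArg eqv hsum
    rw [hcoord, LinearEquiv.apply_symm_apply] at this
    funext k
    exact congrFun this k
  · -- separation
    set K : ConvexCone ℝ (Euc κ) :=
      { carrier := {x : Euc κ | ∃ c : ι → ℝ, 0 ≤ c ∧ ∑ i, c i • v i = x}
        smul_mem' := by
          rintro r hr x ⟨c, hc, hsum⟩
          refine ⟨r • c, smul_nonneg hr.le hc, ?_⟩
          rw [← hsum, Finset.smul_sum]
          exact Finset.sum_congr rfl fun i _ => by
            simp [mul_smul]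
        add_mem' := by
          rintro x ⟨c1, hc1, hs1⟩ y ⟨c2, hc2, hs2⟩
          refine ⟨c1 + c2, add_nonneg hc1 hc2, ?_⟩
          rw [← hs1, ← hs2, ← Finset.sum_add_distrib]
          exact Finset.sum_congr rfl fun i _ => by simp [add_smul] } with hK
    have hKne : (K : Set (Euc κ)).Nonempty := ⟨0, 0, le_refl _, by simp⟩
    have hKcl : IsClosed (K : Set (Euc κ)) := isClosed_cone v
    obtain ⟨y, hy1, hy2⟩ : ∃ y, (∀ x ∈ K, 0 ≤ inner ℝ x y) ∧ inner ℝ y (eqv.symm d) < 0 := by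
      obtain ⟨y, h1, h2⟩ := ProperCone.hyperplane_separation' (E := Euc κ)
        (C := ⟨K.toPointedCone (ConvexCone.Pointed.of_nonempty_of_isClosed hKne hKcl), hKcl⟩) hd
      exact ⟨y, fun x hx => h1 x hx, by rwa [real_inner_comm]⟩
    exfalso
    have hMy : 0 ≤ M.mulVec (eqv y) := by
      intro i
      have hvi : v i ∈ K := by
        refine ⟨Pi.single i 1, ?_, ?_⟩
        · intro i'; by_cases hii : i' = i <;> simp [Pi.single_apply, hii]
        · simp [Pi.single_apply, ite_smul]
      have := hy1 _ hvi
      rw [PiLp.inner_apply] at this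
      simpa [Matrix.mulVec, dotProduct, hv, heqv, RCLike.inner_apply, mul_comm,
        WithLp.linearEquiv_apply, WithLp.linearEquiv_symm_apply] using this
    have hdy := h (eqv y) hMy
    rw [real_inner_comm, PiLp.inner_apply] at hy2
    simp only [heqv, RCLike.inner_apply, conj_trivial, WithLp.linearEquiv_symm_apply] at hy2
    have hy2' : ∑ k, d k * y.ofLp k < 0 :=
      lt_of_eq_of_lt (Finset.sum_congr rfl fun k _ => mul_comm _ _) hy2
    have hdy' : d ⬝ᵥ (eqv y) = ∑ k, d k * y k := by
      simp [dotProduct, heqv, WithLp.linearEquiv_apply]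
    rw [hdy'] at hdy
    linarith


end Farkas11

open Sum Farkas11

theorem stmt_11 (m n : ℕ)
    (A : Matrix (Fin m) (Fin n) ℝ) (b : Fin m → ℝ)
    (hne : (polyV A b).Nonempty) (hbd : Bornology.IsBounded (polyV A b))
    (c : Fin n → ℝ) (vstar : Fin n → ℝ)
    (huniq : {v ∈ polyV A b | ∀ w ∈ polyV A b, c ⬝ᵥ v ≤ c ⬝ᵥ w} = {vstar}) :
    ∃ ρ : Fin m → ℝ, 0 ≤ ρ ∧ Aᵀ.mulVec ρ = c ∧
      ∀ j, (0 < ρ j ↔ A j ⬝ᵥ vstar = b j) := by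
  classical
  have hv : vstar ∈ {v ∈ polyV A b | ∀ w ∈ polyV A b, c ⬝ᵥ v ≤ c ⬝ᵥ w} := by
    rw [huniq]; rfl
  obtain ⟨hvfeas, hvopt⟩ := hv
  have hvfeas' : b ≤ A.mulVec vstar := hvfeas
  set γ := c ⬝ᵥ vstar with hγ
  have huniq' : ∀ v ∈ polyV A b, c ⬝ᵥ v ≤ γ → v = vstar := by
    intro v hvp hvle
    have hmem : v ∈ {v ∈ polyV A b | ∀ w ∈ polyV A b, c ⬝ᵥ v ≤ c ⬝ᵥ w} :=
      ⟨hvp, fun w hw => le_trans hvle (hvopt w hw)⟩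
    rw [huniq] at hmem
    exact hmem
  -- trivial recession cone
  have hrec : ∀ v : Fin n → ℝ, 0 ≤ A.mulVec v → v = 0 := by
    intro v hAv
    by_contra hv0
    obtain ⟨v0, hv0p⟩ := hne
    have hv0p' : b ≤ A.mulVec v0 := hv0p
    obtain ⟨R, hR⟩ := isBounded_iff_forall_norm_le.mp hbd
    have hvn : 0 < ‖v‖ := norm_pos_iff.mpr hv0
    have hR0 : 0 ≤ R := le_trans (norm_nonneg v0) (hR v0 hv0p)
    set k := (R + ‖v0‖ + 1) / ‖v‖ with hk
    have hk0 : 0 ≤ k := by positivity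
    have hmem : v0 + k • v ∈ polyV A b := by
      show b ≤ A.mulVec (v0 + k • v)
      intro i
      rw [Matrix.mulVec_add, Matrix.mulVec_smul]
      have h1 := hv0p' i
      have h2 : 0 ≤ A.mulVec v i := hAv i
      simp only [Pi.add_apply, Pi.smul_apply, smul_eq_mul]
      nlinarith
    have hle := hR _ hmem
    have he1 : ‖k • v‖ = k * ‖v‖ := by
      rw [norm_smul]; simp [abs_of_nonneg hk0, Real.norm_eq_abs]
    have h4 : ‖k • v‖ ≤ ‖v0 + k • v‖ + ‖v0‖ := by
      calc ‖k • v‖ = ‖(v0 + k • v) - v0‖ := by rw [add_sub_cancel_left]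
      _ ≤ ‖v0 + k • v‖ + ‖v0‖ := norm_sub_le _ _
    have he2 : k * ‖v‖ = R + ‖v0‖ + 1 := by
      rw [hk, div_mul_cancel₀ _ (ne_of_gt hvn)]
    linarith
  -- weak duality
  have hweak : ∀ ρ : Fin m → ℝ, 0 ≤ ρ → Aᵀ.mulVec ρ = c → b ⬝ᵥ ρ ≤ γ := by
    intro ρ hρ hAρ
    have h1 : γ = ρ ⬝ᵥ A.mulVec vstar := by
      rw [hγ, ← hAρ, Matrix.mulVec_transpose, Matrix.dotProduct_mulVec]
    have h2 : b ⬝ᵥ ρ ≤ ρ ⬝ᵥ A.mulVec vstar := by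
      rw [dotProduct_comm b ρ]
      apply Finset.sum_le_sum
      intro i _
      exact mul_le_mul_of_nonneg_left (hvfeas' i) (hρ i)
    linarith
  -- complementary slackness
  have hcs : ∀ ρ : Fin m → ℝ, 0 ≤ ρ → Aᵀ.mulVec ρ = c → b ⬝ᵥ ρ = γ →
      ∀ i, A i ⬝ᵥ vstar ≠ b i → ρ i = 0 := by
    intro ρ hρ hAρ hbρ i hi
    have h1 : γ = ρ ⬝ᵥ A.mulVec vstar := by
      rw [hγ, ← hAρ, Matrix.mulVec_transpose, Matrix.dotProduct_mulVec]
    have hsum : ∑ i', ρ i' * (A.mulVec vstar i' - b i') = 0 := by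
      have : ∑ i', ρ i' * (A.mulVec vstar i' - b i')
          = ρ ⬝ᵥ A.mulVec vstar - b ⬝ᵥ ρ := by
        rw [dotProduct_comm b ρ]
        simp [dotProduct, mul_sub, Finset.sum_sub_distrib]
      rw [this, ← h1, hbρ, sub_self]
    have hnn : ∀ i' ∈ Finset.univ, 0 ≤ ρ i' * (A.mulVec vstar i' - b i') := by
      intro i' _
      exact mul_nonneg (hρ i') (by linarith [hvfeas' i'])
    have h0 := (Finset.sum_eq_zero_iff_of_nonneg hnn).mp hsum i (Finset.mem_univ i)
    have hslack : 0 < A.mulVec vstar i - b i := by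
      have := hvfeas' i
      rcases lt_or_eq_of_le this with h | h
      · linarith
      · exact absurd h.symm hi
    by_contra hρi
    have : 0 < ρ i := lt_of_le_of_ne (hρ i) (Ne.symm hρi)
    nlinarith
  -- the big matrix
  set M : Matrix (Fin m ⊕ Bool) (Fin n ⊕ Unit) ℝ :=
    Matrix.of (Sum.elim (fun i => Sum.elim (A i) fun _ => -b i)
      (fun s : Bool => if s then Sum.elim (-c) (fun _ => γ) else Sum.elim 0 fun _ => 1))
    with hM
  -- structure of feasible x for the homogeneous system
  have hkey : ∀ x : (Fin n ⊕ Unit) → ℝ, 0 ≤ M.mulVec x →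
      (x (inr ()) = 0 ∧ x ∘ inl = 0) ∨
      (0 < x (inr ()) ∧ (x (inr ()))⁻¹ • (x ∘ inl) = vstar) := by
    intro x hx
    set t := x (inr ()) with htdef
    set w := x ∘ inl with hwdef
    have hxi : ∀ i, b i * t ≤ A.mulVec w i := by
      intro i
      have h := hx (inl i)
      have hcomp : M.mulVec x (inl i) = A.mulVec w i - b i * t := by
        simp only [hM, Matrix.mulVec, dotProduct, Matrix.of_apply, Sum.elim_inl, Sum.elim_inr,
          Fintype.sum_sum_type, Finset.univ_unique, Finset.sum_singleton, hwdef, htdef,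
          Function.comp_apply, mul_comm, mul_neg, neg_mul]
        ring
      rw [hcomp] at h
      have h0 : (0:ℝ) ≤ A.mulVec w i - b i * t := h
      linarith
    have ht : 0 ≤ t := by
      have h := hx (inr false)
      have hcomp : M.mulVec x (inr false) = t := by
        simp only [hM, Matrix.mulVec, dotProduct, Matrix.of_apply, Sum.elim_inl,
          Sum.elim_inr, Fintype.sum_sum_type, Finset.univ_unique, Finset.sum_singleton,
          htdef, if_neg (Bool.false_ne_true), Pi.zero_apply, zero_mul, Finset.sum_const_zero,
          one_mul, zero_add]
      rw [hcomp] at h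
      exact h
    have hc2 : c ⬝ᵥ w ≤ γ * t := by
      have h := hx (inr true)
      have hcomp : M.mulVec x (inr true) = γ * t - c ⬝ᵥ w := by
        simp [hM, Matrix.mulVec, dotProduct, Fintype.sum_sum_type, htdef, hwdef,
          mul_comm]
        ring
      rw [hcomp] at h
      have h0 : (0:ℝ) ≤ γ * t - c ⬝ᵥ w := h
      linarith
    rcases eq_or_lt_of_le ht with h0 | h0
    · left
      have hw : w = 0 := by
        apply hrec
        intro i
        have := hxi i
        rw [← h0] at this
        simpa using this
      exact ⟨h0.symm, hw⟩
    · right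
      refine ⟨h0, ?_⟩
      apply huniq'
      · show b ≤ A.mulVec (t⁻¹ • w)
        intro i
        rw [Matrix.mulVec_smul]
        have hinv : 0 < t⁻¹ := inv_pos.mpr h0
        simp only [Pi.smul_apply, smul_eq_mul]
        have this : b i * t ≤ A.mulVec w i := hxi i
        calc b i = t⁻¹ * (b i * t) := by field_simp
        _ ≤ t⁻¹ * A.mulVec w i := by
          apply mul_le_mul_of_nonneg_left this hinv.le
      · rw [dotProduct_smul]
        calc t⁻¹ • (c ⬝ᵥ w) ≤ t⁻¹ • (γ * t) := by
              apply mul_le_mul_of_nonneg_left hc2 (inv_pos.mpr h0).le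
        _ = γ := by
          rw [smul_eq_mul, mul_comm γ t, ← mul_assoc, inv_mul_cancel₀ (ne_of_gt h0), one_mul]
  -- dual optimal solution ρ0
  have hFark1 : ∃ y : (Fin m ⊕ Bool) → ℝ, 0 ≤ y ∧
      Mᵀ.mulVec y = Sum.elim c (fun _ => -γ) := by
    apply farkas
    intro x hx
    have hd : Sum.elim c (fun _ => -γ) ⬝ᵥ x = c ⬝ᵥ (x ∘ inl) - γ * x (inr ()) := by
      simp only [dotProduct, Fintype.sum_sum_type, Finset.univ_unique,
        Finset.sum_singleton, Sum.elim_inl, Sum.elim_inr, Function.comp_apply]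
      ring
    rw [hd]
    rcases hkey x hx with ⟨h1, h2⟩ | ⟨h1, h2⟩
    · rw [h1, h2]; simp
    · have h3 : c ⬝ᵥ ((x (inr ()))⁻¹ • (x ∘ inl)) = γ := by rw [h2]
      rw [dotProduct_smul, smul_eq_mul] at h3
      have hne0 : x (inr ()) ≠ 0 := ne_of_gt h1
      have h4 : c ⬝ᵥ (x ∘ inl) = γ * x (inr ()) := by
        field_simp at h3
        linarith
      rw [h4]
      simp
  obtain ⟨y1, hy1nn, hy1eq⟩ := hFark1
  -- coordinates of the transposed big matrix
  have htrans1 : ∀ y : (Fin m ⊕ Bool) → ℝ, ∀ j,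
      Mᵀ.mulVec y (inl j) = Aᵀ.mulVec (y ∘ inl) j - c j * y (inr true) := by
    intro y j
    simp [hM, Matrix.mulVec, dotProduct, Fintype.sum_sum_type, Fintype.sum_bool,
      mul_comm]
    ring
  have htrans2 : ∀ y : (Fin m ⊕ Bool) → ℝ,
      Mᵀ.mulVec y (inr ()) = -(b ⬝ᵥ (y ∘ inl)) + y (inr false) + γ * y (inr true) := by
    intro y
    simp [hM, Matrix.mulVec, dotProduct, Fintype.sum_sum_type, Fintype.sum_bool,
      mul_comm, Finset.sum_neg_distrib]
    ring
  -- build dual optimal ρ0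
  set s1 : ℝ := 1 + y1 (inr true) with hs1def
  have hs1 : 0 < s1 := by
    have := hy1nn (inr true)
    simp only [hs1def]
    have h0 : (0:ℝ) ≤ y1 (inr true) := this
    linarith
  set ρ0 : Fin m → ℝ := s1⁻¹ • (y1 ∘ inl) with hρ0def
  have hρ0nn : 0 ≤ ρ0 := by
    intro i
    exact mul_nonneg (inv_nonneg.mpr hs1.le) (hy1nn (inl i))
  have hAu1 : ∀ j, Aᵀ.mulVec (y1 ∘ inl) j = c j * s1 := by
    intro j
    have h := congrFun hy1eq (inl j)
    rw [htrans1 y1 j] at h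
    simp only [Sum.elim_inl] at h
    rw [hs1def]
    linarith
  have hAρ0 : Aᵀ.mulVec ρ0 = c := by
    funext j
    rw [hρ0def, Matrix.mulVec_smul]
    simp only [Pi.smul_apply, smul_eq_mul]
    rw [hAu1 j]
    field_simp
  have hbu1 : b ⬝ᵥ (y1 ∘ inl) = y1 (inr false) + γ * s1 := by
    have h := congrFun hy1eq (inr ())
    rw [htrans2 y1] at h
    simp only [Sum.elim_inr] at h
    rw [hs1def]
    linarith
  have hbρ0 : b ⬝ᵥ ρ0 = γ := by
    refine le_antisymm (hweak ρ0 hρ0nn hAρ0) ?_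
    rw [hρ0def, dotProduct_smul, smul_eq_mul, hbu1]
    have h0 : (0:ℝ) ≤ y1 (inr false) := hy1nn (inr false)
    have hinv : 0 < s1⁻¹ := inv_pos.mpr hs1
    have : s1⁻¹ * (y1 (inr false) + γ * s1) = s1⁻¹ * y1 (inr false) + γ := by
      field_simp
      all_goals ring
    rw [this]
    nlinarith
  -- strictly positive dual coordinate for each active constraint
  have hactive : ∀ j : Fin m, A j ⬝ᵥ vstar = b j →
      ∃ ρ : Fin m → ℝ, 0 ≤ ρ ∧ Aᵀ.mulVec ρ = c ∧ b ⬝ᵥ ρ = γ ∧ 0 < ρ j := by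
    intro j hj
    obtain ⟨y2, hy2nn, hy2eq⟩ : ∃ y : (Fin m ⊕ Bool) → ℝ, 0 ≤ y ∧
        Mᵀ.mulVec y = Sum.elim (-(A j)) (fun _ => b j) := by
      apply farkas
      intro x hx
      have hd : Sum.elim (-(A j)) (fun _ => b j) ⬝ᵥ x
          = b j * x (inr ()) - A j ⬝ᵥ (x ∘ inl) := by
        simp only [dotProduct, Fintype.sum_sum_type, Finset.univ_unique,
          Finset.sum_singleton, Sum.elim_inl, Sum.elim_inr, Function.comp_apply,
          Pi.neg_apply, neg_mul, Finset.sum_neg_distrib]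
        ring
      rw [hd]
      rcases hkey x hx with ⟨h1, h2⟩ | ⟨h1, h2⟩
      · rw [h1, h2]; simp
      · have h3 : A j ⬝ᵥ ((x (inr ()))⁻¹ • (x ∘ inl)) = b j := by rw [h2]; exact hj
        rw [dotProduct_smul, smul_eq_mul] at h3
        have hne0 : x (inr ()) ≠ 0 := ne_of_gt h1
        have h4 : A j ⬝ᵥ (x ∘ inl) = b j * x (inr ()) := by
          field_simp at h3
          linarith
        rw [h4]
        simp
    set u : Fin m → ℝ := y2 ∘ inl with hudef
    set s : ℝ := y2 (inr true) with hsdef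
    set μ : ℝ := y2 (inr false) with hμdef
    set z : Fin m → ℝ := u + Pi.single j 1 with hzdef
    have hzn : 0 ≤ z := by
      intro i
      have h1 : (0:ℝ) ≤ u i := hy2nn (inl i)
      have h2 : (0:ℝ) ≤ Pi.single (M := fun _ : Fin m => ℝ) j 1 i := by
        rcases eq_or_ne i j with h | h <;> simp [Pi.single_apply, h]
      show (0:ℝ) ≤ z i
      simp only [hzdef, Pi.add_apply]
      linarith
    have hzj : (1:ℝ) ≤ z j := by
      have h1 : (0:ℝ) ≤ u j := hy2nn (inl j)
      simp only [hzdef, Pi.add_apply, Pi.single_eq_same]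
      linarith
    have hsingle : Aᵀ.mulVec (Pi.single j 1) = fun j' => A j j' := by
      funext j'
      simp [Matrix.mulVec, dotProduct, Pi.single_apply, mul_ite,
        Finset.sum_ite_eq']
    have hAz : Aᵀ.mulVec z = s • c := by
      funext j'
      have h := congrFun hy2eq (inl j')
      rw [htrans1 y2 j'] at h
      simp only [Sum.elim_inl, Pi.neg_apply] at h
      rw [hzdef, Matrix.mulVec_add, hsingle]
      simp only [Pi.add_apply, Pi.smul_apply, smul_eq_mul]
      rw [← hsdef] at h
      linarith
    have hbz : b ⬝ᵥ z = μ + γ * s := by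
      have h := congrFun hy2eq (inr ())
      rw [htrans2 y2] at h
      simp only [Sum.elim_inr] at h
      rw [hzdef, dotProduct_add]
      have hb1 : b ⬝ᵥ Pi.single j 1 = b j := by
        simp [dotProduct, Pi.single_apply, mul_ite, Finset.sum_ite_eq']
      rw [hb1, ← hudef, ← hsdef, ← hμdef] at *
      linarith
    have hs0 : 0 ≤ s := hy2nn (inr true)
    rcases eq_or_lt_of_le hs0 with hs | hs
    · -- s = 0 : add the ray z to ρ0
      have hAz0 : Aᵀ.mulVec z = 0 := by rw [hAz, ← hs, zero_smul]
      have hbz0 : b ⬝ᵥ z = μ := by rw [hbz, ← hs]; ring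
      have hnn : 0 ≤ ρ0 + z := fun i => add_nonneg (hρ0nn i) (hzn i)
      have hA : Aᵀ.mulVec (ρ0 + z) = c := by
        rw [Matrix.mulVec_add, hAρ0, hAz0, add_zero]
      have hμ0 : 0 ≤ μ := hy2nn (inr false)
      have hb : b ⬝ᵥ (ρ0 + z) = γ := by
        refine le_antisymm (hweak _ hnn hA) ?_
        rw [dotProduct_add, hbρ0, hbz0]
        linarith
      refine ⟨ρ0 + z, hnn, hA, hb, ?_⟩
      have h0 : (0:ℝ) ≤ ρ0 j := hρ0nn j
      show (0:ℝ) < ρ0 j + z j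
      linarith
    · -- s > 0 : rescale z
      have hnn : 0 ≤ s⁻¹ • z := fun i =>
        mul_nonneg (inv_nonneg.mpr hs.le) (hzn i)
      have hA : Aᵀ.mulVec (s⁻¹ • z) = c := by
        rw [Matrix.mulVec_smul, hAz, smul_smul, inv_mul_cancel₀ (ne_of_gt hs), one_smul]
      have hμ0 : 0 ≤ μ := hy2nn (inr false)
      have hb : b ⬝ᵥ (s⁻¹ • z) = γ := by
        refine le_antisymm (hweak _ hnn hA) ?_
        rw [dotProduct_smul, smul_eq_mul, hbz]
        have : s⁻¹ * (μ + γ * s) = s⁻¹ * μ + γ := by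
          field_simp
          all_goals ring
        rw [this]
        have hinv : 0 < s⁻¹ := inv_pos.mpr hs
        nlinarith
      refine ⟨s⁻¹ • z, hnn, hA, hb, ?_⟩
      simp only [Pi.smul_apply, smul_eq_mul]
      have hinv : 0 < s⁻¹ := inv_pos.mpr hs
      nlinarith
  -- assemble the strictly complementary dual solution
  have hex : ∀ j : Fin m, ∃ ρ : Fin m → ℝ, 0 ≤ ρ ∧ Aᵀ.mulVec ρ = c ∧ b ⬝ᵥ ρ = γ ∧
      (A j ⬝ᵥ vstar = b j → 0 < ρ j) := by
    intro j
    by_cases hj : A j ⬝ᵥ vstar = b j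
    · obtain ⟨ρ, h1, h2, h3, h4⟩ := hactive j hj
      exact ⟨ρ, h1, h2, h3, fun _ => h4⟩
    · exact ⟨ρ0, hρ0nn, hAρ0, hbρ0, fun h => absurd h hj⟩
  choose f hf1 hf2 hf3 hf4 using hex
  rcases Nat.eq_zero_or_pos m with hm | hm
  · subst hm
    exact ⟨ρ0, hρ0nn, hAρ0, fun j => j.elim0⟩
  · have hmpos : (0:ℝ) < m := by exact_mod_cast hm
    refine ⟨(m:ℝ)⁻¹ • ∑ j, f j, ?_, ?_, ?_⟩
    · intro i
      simp only [Pi.smul_apply, Finset.sum_apply, smul_eq_mul, Pi.zero_apply]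
      exact mul_nonneg (inv_nonneg.mpr hmpos.le) (Finset.sum_nonneg fun k _ => hf1 k i)
    · have hAs : Aᵀ.mulVec (∑ j, f j) = (m:ℝ) • c := by
        have hmap : Aᵀ.mulVec (∑ j, f j) = ∑ j, Aᵀ.mulVec (f j) := by
          rw [show Aᵀ.mulVec (∑ j, f j) = Matrix.mulVecLin Aᵀ (∑ j, f j) from rfl,
            map_sum]
          rfl
        rw [hmap]
        simp only [hf2]
        rw [Finset.sum_const, Finset.card_univ, Fintype.card_fin]
        rw [← Nat.cast_smul_eq_nsmul ℝ]
      rw [Matrix.mulVec_smul, hAs, smul_smul, inv_mul_cancel₀ (ne_of_gt hmpos), one_smul]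
    · intro j
      have happ : ((m:ℝ)⁻¹ • ∑ k, f k) j = (m:ℝ)⁻¹ * ∑ k, f k j := by
        simp [Finset.sum_apply]
      constructor
      · intro hpos
        by_contra hj
        have hz : ∀ k, f k j = 0 := fun k => hcs (f k) (hf1 k) (hf2 k) (hf3 k) j hj
        rw [happ] at hpos
        simp [hz] at hpos
      · intro hj
        have h1 : 0 < f j j := hf4 j hj
        have h2 : f j j ≤ ∑ k, f k j :=
          Finset.single_le_sum (fun k _ => hf1 k j) (Finset.mem_univ j)
        rw [happ]
        have hinv : 0 < (m:ℝ)⁻¹ := inv_pos.mpr hmpos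
        exact mul_pos hinv (lt_of_lt_of_le h1 h2)
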